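/- Let n ≥ 1, α ∈ (0,1), let Ã be a real n×n matrix, and let P, Q be symmetric positive definite real n×n matrices with Ãᵀ·P + P·Ã = -Q. Let x : [0,∞) → ℝⁿ be differentiable with x'(t) = Ã·x(t) - x(t)·‖x(t)‖^(α-1) whenever x(t) ≠ 0, and x'(t) = 0 whenever x(t) = 0. Then there exists a finite T ≥ 0 such that x(t) = 0 for all t ≥ T; moreover V(t) = x(t)ᵀ·P·x(t) satisfies V'(t) ≤ -c·V(t)^β for all t with x(t) ≠ 0, where β = (1+α)/2 and c = 2·λ_min(P)/λ_max(P)^β. -/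

import Mathlib

open Matrix

local notation "⟪" x ", " y "⟫" => @inner ℝ _ _ x y

lemma aux_inner_eq {n : ℕ} (M : Matrix (Fin n) (Fin n) ℝ) (y : EuclideanSpace ℝ (Fin n)) :
    ⟪y, Matrix.toEuclideanLin M y⟫ =
      dotProduct (star (WithLp.equiv 2 _ y)) (M *ᵥ (WithLp.equiv 2 _ y)) := by
  simp [PiLp.inner_apply, Matrix.toEuclideanLin_apply, dotProduct, mul_comm]

lemma aux_pos {n : ℕ} {M : Matrix (Fin n) (Fin n) ℝ} (hM : M.PosDef)
    {y : EuclideanSpace ℝ (Fin n)} (hy : y ≠ 0) :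
    0 < ⟪y, Matrix.toEuclideanLin M y⟫ := by
  rw [aux_inner_eq]
  exact hM.dotProduct_mulVec_pos (fun h => hy (by ext i; exact congrFun h i))

lemma aux_nonneg {n : ℕ} {M : Matrix (Fin n) (Fin n) ℝ} (hM : M.PosDef)
    (y : EuclideanSpace ℝ (Fin n)) :
    0 ≤ ⟪y, Matrix.toEuclideanLin M y⟫ := by
  rw [aux_inner_eq]
  exact hM.posSemidef.dotProduct_mulVec_nonneg _

lemma aux_mul {n : ℕ} (M N : Matrix (Fin n) (Fin n) ℝ) (y : EuclideanSpace ℝ (Fin n)) :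
    Matrix.toEuclideanLin (M * N) y = Matrix.toEuclideanLin M (Matrix.toEuclideanLin N y) := by
  simp [Matrix.toEuclideanLin_apply, Matrix.mulVec_mulVec]

lemma aux_quad_eq_sum {n : ℕ} (M : Matrix (Fin n) (Fin n) ℝ) (hM : M.IsHermitian)
    (y : EuclideanSpace ℝ (Fin n)) :
    ⟪y, Matrix.toEuclideanLin M y⟫ =
      ∑ i, hM.eigenvalues i * (hM.eigenvectorBasis.repr y i) ^ 2 := by
  set b := hM.eigenvectorBasis with hbdef
  have hsym := (Matrix.isHermitian_iff_isSymmetric).1 hM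
  have h1 : ⟪y, Matrix.toEuclideanLin M y⟫
      = ⟪b.repr y, b.repr (Matrix.toEuclideanLin M y)⟫ := by
    rw [b.repr.inner_map_map]
  have h2 : ∀ i, b.repr (Matrix.toEuclideanLin M y) i = hM.eigenvalues i * b.repr y i := by
    intro i
    have hb : Matrix.toEuclideanLin M (b i) = hM.eigenvalues i • b i := by
      rw [Matrix.toEuclideanLin_apply]
      ext j
      simpa using congrFun (hM.mulVec_eigenvectorBasis i) j
    rw [b.repr_apply_apply, b.repr_apply_apply, ← hsym (b i) y, hb,
      real_inner_smul_left]
  rw [h1, PiLp.inner_apply]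
  refine Finset.sum_congr rfl fun i _ => ?_
  rw [h2 i]
  simp [RCLike.inner_apply]
  ring

lemma aux_norm_eq_sum {n : ℕ} (M : Matrix (Fin n) (Fin n) ℝ) (hM : M.IsHermitian)
    (y : EuclideanSpace ℝ (Fin n)) :
    ‖y‖ ^ 2 = ∑ i, (hM.eigenvectorBasis.repr y i) ^ 2 := by
  set b := hM.eigenvectorBasis
  have : ‖y‖ ^ 2 = ⟪b.repr y, b.repr y⟫ := by
    rw [b.repr.inner_map_map, real_inner_self_eq_norm_sq]
  rw [this, PiLp.inner_apply]
  refine Finset.sum_congr rfl fun i _ => ?_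
  simp [RCLike.inner_apply]

lemma aux_rayleigh_lower {n : ℕ} (hn : 1 ≤ n) (M : Matrix (Fin n) (Fin n) ℝ)
    (hM : M.IsHermitian) (y : EuclideanSpace ℝ (Fin n)) :
    (⨅ i, hM.eigenvalues i) * ‖y‖ ^ 2 ≤ ⟪y, Matrix.toEuclideanLin M y⟫ := by
  haveI : Nonempty (Fin n) := ⟨⟨0, hn⟩⟩
  rw [aux_quad_eq_sum M hM y, aux_norm_eq_sum M hM y, Finset.mul_sum]
  refine Finset.sum_le_sum fun i _ => ?_
  exact mul_le_mul_of_nonneg_right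
    (ciInf_le (Set.finite_range _).bddBelow i) (sq_nonneg _)

lemma aux_rayleigh_upper {n : ℕ} (hn : 1 ≤ n) (M : Matrix (Fin n) (Fin n) ℝ)
    (hM : M.IsHermitian) (y : EuclideanSpace ℝ (Fin n)) :
    ⟪y, Matrix.toEuclideanLin M y⟫ ≤ (⨆ i, hM.eigenvalues i) * ‖y‖ ^ 2 := by
  haveI : Nonempty (Fin n) := ⟨⟨0, hn⟩⟩
  rw [aux_quad_eq_sum M hM y, aux_norm_eq_sum M hM y, Finset.mul_sum]
  refine Finset.sum_le_sum fun i _ => ?_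
  exact mul_le_mul_of_nonneg_right
    (le_ciSup (Set.finite_range _).bddAbove i) (sq_nonneg _)

lemma aux_hasDerivAt_quad {n : ℕ} {M : Matrix (Fin n) (Fin n) ℝ} (hM : M.IsHermitian)
    {x : ℝ → EuclideanSpace ℝ (Fin n)} {v : EuclideanSpace ℝ (Fin n)} {t : ℝ}
    (hx : HasDerivAt x v t) :
    HasDerivAt (fun s => ⟪x s, Matrix.toEuclideanLin M (x s)⟫)
      (2 * ⟪v, Matrix.toEuclideanLin M (x t)⟫) t := by
  set L : EuclideanSpace ℝ (Fin n) →L[ℝ] EuclideanSpace ℝ (Fin n) :=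
    LinearMap.toContinuousLinearMap (Matrix.toEuclideanLin M)
  have hL : ∀ y, L y = Matrix.toEuclideanLin M y := fun y => rfl
  have hLx : HasDerivAt (fun s => L (x s)) (L v) t :=
    (L.hasFDerivAt.comp_hasDerivAt t hx)
  have h := hx.inner ℝ hLx
  have hsym := (Matrix.isHermitian_iff_isSymmetric).1 hM
  have heq : ⟪x t, L v⟫ + ⟪v, L (x t)⟫ = 2 * ⟪v, Matrix.toEuclideanLin M (x t)⟫ := by
    rw [hL, hL, ← hsym (x t) v, real_inner_comm]
    ring
  rw [heq] at h
  simpa only [hL] using h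

lemma aux_value {n : ℕ} (Atil P Q : Matrix (Fin n) (Fin n) ℝ) (hP : P.IsHermitian)
    (hLyap : Atilᵀ * P + P * Atil = -Q) (y : EuclideanSpace ℝ (Fin n)) (r : ℝ) :
    2 * ⟪Matrix.toEuclideanLin Atil y - r • y, Matrix.toEuclideanLin P y⟫ =
      -⟪y, Matrix.toEuclideanLin Q y⟫ - 2 * r * ⟪y, Matrix.toEuclideanLin P y⟫ := by
  have hsym := (Matrix.isHermitian_iff_isSymmetric).1 hP
  have hadj : Matrix.toEuclideanLin Atilᵀ = LinearMap.adjoint (Matrix.toEuclideanLin Atil) := by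
    rw [← Matrix.conjTranspose_eq_transpose_of_trivial]
    exact Matrix.toEuclideanLin_conjTranspose_eq_adjoint Atil
  have h1 : ⟪Matrix.toEuclideanLin Atil y, Matrix.toEuclideanLin P y⟫
      = ⟪y, Matrix.toEuclideanLin (Atilᵀ * P) y⟫ := by
    rw [aux_mul, hadj, LinearMap.adjoint_inner_right]
  have h2 : ⟪Matrix.toEuclideanLin Atil y, Matrix.toEuclideanLin P y⟫
      = ⟪y, Matrix.toEuclideanLin (P * Atil) y⟫ := by
    rw [aux_mul, real_inner_comm, hsym]
  have h3 : ⟪y, Matrix.toEuclideanLin (Atilᵀ * P) y⟫ + ⟪y, Matrix.toEuclideanLin (P * Atil) y⟫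
      = -⟪y, Matrix.toEuclideanLin Q y⟫ := by
    rw [← inner_add_right, ← LinearMap.add_apply, ← map_add, hLyap]
    simp only [map_neg, LinearMap.neg_apply, inner_neg_right]
  rw [inner_sub_left, real_inner_smul_left]
  nlinarith [h1, h2, h3]

theorem stmt_14 (n : ℕ) (hn : 1 ≤ n) (α : ℝ) (hα0 : 0 < α) (hα1 : α < 1)
    (Atil P Q : Matrix (Fin n) (Fin n) ℝ)
    (hP : P.PosDef) (hQ : Q.PosDef)
    (hLyap : Atilᵀ * P + P * Atil = -Q)
    (x : ℝ → EuclideanSpace ℝ (Fin n))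
    (hx : ∀ t, 0 ≤ t → x t ≠ 0 →
      HasDerivAt x (Matrix.toEuclideanLin Atil (x t) - ‖x t‖ ^ (α - 1) • x t) t)
    (hx0 : ∀ t, 0 ≤ t → x t = 0 → HasDerivAt x 0 t) :
    (∃ T : ℝ, 0 ≤ T ∧ ∀ t, T ≤ t → x t = 0) ∧
      ∀ t, 0 ≤ t → x t ≠ 0 →
        deriv (fun s => (inner ℝ (x s) (Matrix.toEuclideanLin P (x s)) : ℝ)) t ≤
          -(2 * (⨅ i, hP.isHermitian.eigenvalues i) /
              (⨆ i, hP.isHermitian.eigenvalues i) ^ ((1 + α) / 2)) *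
            (inner ℝ (x t) (Matrix.toEuclideanLin P (x t)) : ℝ) ^ ((1 + α) / 2) := by
  haveI : Nonempty (Fin n) := ⟨⟨0, hn⟩⟩
  set β : ℝ := (1 + α) / 2 with hβdef
  set γ : ℝ := (1 - α) / 2 with hγdef
  set lm : ℝ := ⨅ i, hP.isHermitian.eigenvalues i with hlm
  set lM : ℝ := ⨆ i, hP.isHermitian.eigenvalues i with hlM
  set c : ℝ := 2 * lm / lM ^ β with hc
  set V : ℝ → ℝ := fun s => (inner ℝ (x s) (Matrix.toEuclideanLin P (x s)) : ℝ) with hVdef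
  have hlm_pos : 0 < lm := by
    obtain ⟨j, hj⟩ := Finite.exists_min hP.isHermitian.eigenvalues
    exact lt_of_lt_of_le (hP.eigenvalues_pos j) (le_ciInf hj)
  have hlM_pos : 0 < lM :=
    lt_of_lt_of_le (hP.eigenvalues_pos (Classical.arbitrary _))
      (le_ciSup (Set.finite_range _).bddAbove _)
  have hβpos : 0 < β := by rw [hβdef]; linarith
  have hγpos : 0 < γ := by rw [hγdef]; linarith
  have hc_pos : 0 < c := div_pos (by positivity) (Real.rpow_pos_of_pos hlM_pos β)
  have hVpos : ∀ t, x t ≠ 0 → 0 < V t := fun t ht => aux_pos hP ht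
  have hVnonneg : ∀ t, 0 ≤ V t := fun t => aux_nonneg hP _
  have hVd : ∀ t, 0 ≤ t → x t ≠ 0 →
      HasDerivAt V (-⟪x t, Matrix.toEuclideanLin Q (x t)⟫ - 2 * ‖x t‖ ^ (α - 1) * V t) t := by
    intro t ht hne
    have h := aux_hasDerivAt_quad hP.isHermitian (hx t ht hne)
    rwa [aux_value Atil P Q hP.isHermitian hLyap (x t) (‖x t‖ ^ (α - 1))] at h
  have hVd0 : ∀ t, 0 ≤ t → x t = 0 → HasDerivAt V 0 t := by
    intro t ht h0
    have h := aux_hasDerivAt_quad hP.isHermitian (hx0 t ht h0)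
    simpa using h
  have hkey : ∀ t, 0 ≤ t → x t ≠ 0 →
      -⟪x t, Matrix.toEuclideanLin Q (x t)⟫ - 2 * ‖x t‖ ^ (α - 1) * V t
        ≤ -c * V t ^ β := by
    intro t ht hne
    have hnx : 0 < ‖x t‖ := norm_pos_iff.2 hne
    have hVt : 0 < V t := hVpos t hne
    have hQp : 0 < ⟪x t, Matrix.toEuclideanLin Q (x t)⟫ := aux_pos hQ hne
    have hlow : lm * ‖x t‖ ^ 2 ≤ V t := aux_rayleigh_lower hn P hP.isHermitian (x t)
    have hup : V t ≤ lM * ‖x t‖ ^ 2 := aux_rayleigh_upper hn P hP.isHermitian (x t)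
    have h2r : (‖x t‖ : ℝ) ^ (2 : ℕ) = ‖x t‖ ^ ((2 : ℝ)) := (Real.rpow_natCast _ 2).symm
    have hstep1 : V t / lM ≤ ‖x t‖ ^ ((2 : ℝ)) := by
      rw [← h2r, div_le_iff₀ hlM_pos]; linarith
    have hstep2 : (V t / lM) ^ β ≤ ‖x t‖ ^ (1 + α) := by
      calc (V t / lM) ^ β ≤ (‖x t‖ ^ ((2 : ℝ))) ^ β :=
            Real.rpow_le_rpow (by positivity) hstep1 (le_of_lt hβpos)
        _ = ‖x t‖ ^ ((2 : ℝ) * β) := by rw [← Real.rpow_mul (norm_nonneg _)]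
        _ = ‖x t‖ ^ (1 + α) := by rw [hβdef]; ring_nf
    have hdiv : (V t / lM) ^ β = V t ^ β / lM ^ β :=
      Real.div_rpow (le_of_lt hVt) (le_of_lt hlM_pos) β
    have hprod : ‖x t‖ ^ (α - 1) * ‖x t‖ ^ ((2 : ℝ)) = ‖x t‖ ^ (1 + α) := by
      rw [← Real.rpow_add hnx]; ring_nf
    have hr_pos : (0 : ℝ) < ‖x t‖ ^ (α - 1) := Real.rpow_pos_of_pos hnx _
    have hchain : c * V t ^ β ≤ 2 * ‖x t‖ ^ (α - 1) * V t := by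
      have e1 : 2 * ‖x t‖ ^ (α - 1) * V t ≥ 2 * ‖x t‖ ^ (α - 1) * (lm * ‖x t‖ ^ 2) := by
        apply mul_le_mul_of_nonneg_left hlow (by positivity)
      have e2 : 2 * ‖x t‖ ^ (α - 1) * (lm * ‖x t‖ ^ 2) = 2 * lm * ‖x t‖ ^ (1 + α) := by
        rw [h2r, ← hprod]; ring
      have e3 : 2 * lm * ‖x t‖ ^ (1 + α) ≥ 2 * lm * ((V t / lM) ^ β) := by
        apply mul_le_mul_of_nonneg_left hstep2 (by positivity)
      have e4 : 2 * lm * ((V t / lM) ^ β) = c * V t ^ β := by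
        rw [hdiv, hc]; ring
      linarith
    linarith
  have concl2 : ∀ t, 0 ≤ t → x t ≠ 0 →
      deriv V t ≤ -c * V t ^ β := by
    intro t ht hne
    rw [(hVd t ht hne).deriv]
    exact hkey t ht hne
  have hVanti : AntitoneOn V (Set.Ici (0 : ℝ)) := by
    apply antitoneOn_of_deriv_nonpos (convex_Ici 0)
    · intro t ht
      by_cases h0 : x t = 0
      · exact (hVd0 t ht h0).continuousAt.continuousWithinAt
      · exact (hVd t ht h0).continuousAt.continuousWithinAt
    · rw [interior_Ici]
      intro t ht
      have ht' : (0 : ℝ) ≤ t := le_of_lt ht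
      by_cases h0 : x t = 0
      · exact (hVd0 t ht' h0).differentiableAt.differentiableWithinAt
      · exact (hVd t ht' h0).differentiableAt.differentiableWithinAt
    · rw [interior_Ici]
      intro t ht
      have ht' : (0 : ℝ) ≤ t := le_of_lt ht
      by_cases h0 : x t = 0
      · rw [(hVd0 t ht' h0).deriv]
      · have h1 := concl2 t ht' h0
        have h2 : -c * V t ^ β ≤ 0 := by
          have := Real.rpow_nonneg (hVnonneg t) β
          nlinarith
        linarith
  constructor
  · by_cases hex : ∃ t₀, 0 ≤ t₀ ∧ x t₀ = 0
    · obtain ⟨t₀, ht₀, hxt₀⟩ := hex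
      refine ⟨t₀, ht₀, fun t htt => ?_⟩
      have ht : (0 : ℝ) ≤ t := le_trans ht₀ htt
      have hVle : V t ≤ V t₀ := hVanti (Set.mem_Ici.2 ht₀) (Set.mem_Ici.2 ht) htt
      have hV0 : V t₀ = 0 := by simp [hVdef, hxt₀]
      have hVeq : V t = 0 := le_antisymm (by linarith) (hVnonneg t)
      by_contra hne
      exact absurd hVeq (ne_of_gt (hVpos t hne))
    · exfalso
      push_neg at hex
      set g : ℝ → ℝ := fun s => V s ^ γ + γ * c * s with hgdef
      have hganti : AntitoneOn g (Set.Ici (0 : ℝ)) := by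
        apply antitoneOn_of_deriv_nonpos (convex_Ici 0)
        · apply ContinuousOn.add
          · apply ContinuousOn.rpow_const (p := γ)
            · intro t ht
              exact (hVd t ht (hex t ht)).continuousAt.continuousWithinAt
            · intro t ht
              exact Or.inl (ne_of_gt (hVpos t (hex t ht)))
          · exact (continuous_const.mul continuous_id).continuousOn
        · rw [interior_Ici]
          intro t ht
          have ht' : (0 : ℝ) ≤ t := le_of_lt ht
          have hd := (hVd t ht' (hex t ht')).rpow_const (p := γ)
            (Or.inl (ne_of_gt (hVpos t (hex t ht'))))
          have hld : HasDerivAt (fun s : ℝ => γ * c * s) (γ * c) t := by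
            simpa using (hasDerivAt_id t).const_mul (γ * c)
          exact (hd.add hld).differentiableAt.differentiableWithinAt
        · rw [interior_Ici]
          intro t ht
          have ht' : (0 : ℝ) ≤ t := le_of_lt ht
          have hVt := hVpos t (hex t ht')
          have hd := (hVd t ht' (hex t ht')).rpow_const (p := γ) (Or.inl (ne_of_gt hVt))
          have hld : HasDerivAt (fun s : ℝ => γ * c * s) (γ * c) t := by
            simpa using (hasDerivAt_id t).const_mul (γ * c)
          rw [show deriv g t = _ from (hd.add hld).deriv]
          have hk := hkey t ht' (hex t ht')
          have hpow_pos : (0 : ℝ) < V t ^ (γ - 1) := Real.rpow_pos_of_pos hVt _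
          have hmul : γ * V t ^ (γ - 1) *
              (-⟪x t, Matrix.toEuclideanLin Q (x t)⟫ - 2 * ‖x t‖ ^ (α - 1) * V t)
              ≤ γ * V t ^ (γ - 1) * (-c * V t ^ β) :=
            mul_le_mul_of_nonneg_left hk (by positivity)
          have hone : V t ^ (γ - 1) * V t ^ β = 1 := by
            rw [← Real.rpow_add hVt]
            have : γ - 1 + β = 0 := by rw [hγdef, hβdef]; ring
            rw [this, Real.rpow_zero]
          have hcomb : γ * V t ^ (γ - 1) * (-c * V t ^ β) = -(γ * c) := by
            have : γ * V t ^ (γ - 1) * (-c * V t ^ β)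
                = -(γ * c) * (V t ^ (γ - 1) * V t ^ β) := by ring
            rw [this, hone, mul_one]
          linarith
      have hγc : 0 < γ * c := mul_pos hγpos hc_pos
      have hV0g : 0 ≤ V 0 ^ γ := Real.rpow_nonneg (hVnonneg 0) γ
      set T : ℝ := V 0 ^ γ / (γ * c) + 1 with hT
      have hT0 : (0 : ℝ) ≤ T := by positivity
      have hle := hganti (Set.mem_Ici.2 le_rfl) (Set.mem_Ici.2 hT0) hT0
      have hgT : V T ^ γ + γ * c * T ≤ V 0 ^ γ + γ * c * 0 := hle
      have hVT : 0 ≤ V T ^ γ := Real.rpow_nonneg (hVnonneg T) γ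
      have hTeq : γ * c * T = V 0 ^ γ + γ * c := by
        rw [hT]; field_simp
      linarith
  · exact concl2
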